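/- Let K₀ ⊂ U(5) be the set of block-diagonal matrices diag(A, B, c) with A, B ∈ SU(2) and |c| = 1, and let g ∈ U(5) be the matrix determined by ge₁ = e₃, ge₂ = −e₄, ge₃ = e₁, ge₄ = e₂, ge₅ = e₅. Then (i) the subspace of traceless 5×5 complex matrices X with hXh⁻¹ = X for all h ∈ K₀ equals { diag(c₁,c₁,c₂,c₂,c₃) : 2c₁+2c₂+c₃ = 0 }, which is 2-dimensional; (ii) g·diag(c₁,c₁,c₂,c₂,c₃)·g⁻¹ = diag(c₂,c₂,c₁,c₁,c₃); consequently the subspace of traceless X fixed by conjugation by all of K₀ and by g is the one-dimensional span ℂ·diag(−1,−1,−1,−1,4). -/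

import Mathlib

/-!
STATEMENT 10: Traceless 5×5 complex matrices fixed under conjugation by all
h = diag(A,B,c) ∈ K₀ form { diag(c₁,c₁,c₂,c₂,c₃) : 2c₁+2c₂+c₃ = 0 }
(2-dimensional); the ℤ₄-generator g conjugates diag(c₁,c₁,c₂,c₂,c₃) to
diag(c₂,c₂,c₁,c₁,c₃); hence the joint fixed space is ℂ·diag(−1,−1,−1,−1,4).
-/

noncomputable section

abbrev Mat2 : Type := Matrix (Fin 2) (Fin 2) ℂ

/-- The special unitary group SU(2), as a set of matrices. -/
def SU2 : Set Mat2 := {A | A * A.conjTranspose = 1 ∧ A.det = 1}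

/-- The block-diagonal matrix diag(A, B, c) ∈ U(5). -/
def bd5 (A B : Mat2) (c : ℂ) : Matrix (Fin 5) (Fin 5) ℂ :=
  !![A 0 0, A 0 1, 0, 0, 0;
     A 1 0, A 1 1, 0, 0, 0;
     0, 0, B 0 0, B 0 1, 0;
     0, 0, B 1 0, B 1 1, 0;
     0, 0, 0, 0, c]

/-- The ℤ₄-generator g ∈ U(5): ge₁ = e₃, ge₂ = −e₄, ge₃ = e₁, ge₄ = e₂, ge₅ = e₅. -/
def g5 : Matrix (Fin 5) (Fin 5) ℂ :=
  !![0, 0, 1, 0, 0;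
     0, 0, 0, 1, 0;
     1, 0, 0, 0, 0;
     0, -1, 0, 0, 0;
     0, 0, 0, 0, 1]

/-- The set { diag(c₁,c₁,c₂,c₂,c₃) : 2c₁+2c₂+c₃ = 0 }. -/
def diagSet : Set (Matrix (Fin 5) (Fin 5) ℂ) :=
  {Y | ∃ c₁ c₂ c₃ : ℂ, 2 * c₁ + 2 * c₂ + c₃ = 0 ∧ Y = Matrix.diagonal ![c₁, c₁, c₂, c₂, c₃]}


set_option maxHeartbeats 1000000 in
lemma bd5_unitary (A B : Mat2) (c : ℂ) (hA : A ∈ SU2) (hB : B ∈ SU2)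
    (hc : ‖c‖ = 1) : bd5 A B c * (bd5 A B c).conjTranspose = 1 := by
  have hA00 := congrFun (congrFun hA.1 0) 0
  have hA01 := congrFun (congrFun hA.1 0) 1
  have hA10 := congrFun (congrFun hA.1 1) 0
  have hA11 := congrFun (congrFun hA.1 1) 1
  have hB00 := congrFun (congrFun hB.1 0) 0
  have hB01 := congrFun (congrFun hB.1 0) 1
  have hB10 := congrFun (congrFun hB.1 1) 0
  have hB11 := congrFun (congrFun hB.1 1) 1
  simp [Matrix.mul_apply, Fin.sum_univ_two, Matrix.conjTranspose_apply, Matrix.one_apply] at hA00 hA01 hA10 hA11 hB00 hB01 hB10 hB11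
  have hcc : c * (starRingEnd ℂ) c = 1 := by
    rw [Complex.mul_conj]
    norm_cast
    rw [Complex.normSq_eq_norm_sq, hc]; norm_num
  ext i j
  fin_cases i <;> fin_cases j <;>
    simp [bd5, Matrix.mul_apply, Fin.sum_univ_five, Matrix.conjTranspose_apply, Matrix.one_apply] <;>
    first
      | linear_combination hA00 | linear_combination hA01 | linear_combination hA10
      | linear_combination hA11 | linear_combination hB00 | linear_combination hB01
      | linear_combination hB10 | linear_combination hB11 | linear_combination hcc

lemma conj_iff_comm (h X : Matrix (Fin 5) (Fin 5) ℂ) (hu : h * h.conjTranspose = 1) :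
    h * X * h⁻¹ = X ↔ h * X = X * h := by
  have hinv : h⁻¹ = h.conjTranspose := Matrix.inv_eq_right_inv hu
  have hu' : h.conjTranspose * h = 1 := mul_eq_one_comm.mp hu
  rw [hinv]
  constructor
  · intro he
    calc h * X = h * X * (h.conjTranspose * h) := by rw [hu', mul_one]
    _ = (h * X * h.conjTranspose) * h := by noncomm_ring
    _ = X * h := by rw [he]
  · intro he
    rw [he, mul_assoc, hu, mul_one]

set_option maxHeartbeats 1000000 in
lemma bd5_comm_diag (A B : Mat2) (c c₁ c₂ c₃ : ℂ) :
    bd5 A B c * Matrix.diagonal ![c₁, c₁, c₂, c₂, c₃]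
      = Matrix.diagonal ![c₁, c₁, c₂, c₂, c₃] * bd5 A B c := by
  ext i j
  fin_cases i <;> fin_cases j <;>
    simp [bd5, Matrix.mul_apply, Fin.sum_univ_five, Matrix.diagonal, Matrix.vecHead, Matrix.vecTail] <;> ring

def A1 : Mat2 := !![Complex.I, 0; 0, -Complex.I]
def AJ : Mat2 := !![0, 1; -1, 0]

lemma A1_mem : A1 ∈ SU2 := by
  constructor
  · ext i j
    fin_cases i <;> fin_cases j <;>
      simp [A1, Matrix.mul_apply, Fin.sum_univ_two, Matrix.conjTranspose_apply, Matrix.one_apply]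
  · simp [A1, Matrix.det_fin_two]

lemma AJ_mem : AJ ∈ SU2 := by
  constructor
  · ext i j
    fin_cases i <;> fin_cases j <;>
      simp [AJ, Matrix.mul_apply, Fin.sum_univ_two, Matrix.conjTranspose_apply, Matrix.one_apply]
  · simp [AJ, Matrix.det_fin_two]

lemma one_mem : (1 : Mat2) ∈ SU2 := by
  exact ⟨by simp, by simp⟩

lemma kill {a b : ℂ} (hab : a - b ≠ 0) {x : ℂ} (h : a * x = x * b) : x = 0 := by
  have h2 : (a - b) * x = 0 := by linear_combination h
  rcases mul_eq_zero.mp h2 with h' | h'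
  · exact absurd h' hab
  · exact h'

set_option maxHeartbeats 2000000 in
lemma forward (X : Matrix (Fin 5) (Fin 5) ℂ) (htr : X.trace = 0)
    (hX : ∀ (A B : Mat2) (c : ℂ), A ∈ SU2 → B ∈ SU2 → ‖c‖ = 1 →
      bd5 A B c * X * (bd5 A B c)⁻¹ = X) : X ∈ diagSet := by
  have E1 : bd5 A1 1 1 * X = X * bd5 A1 1 1 :=
    (conj_iff_comm _ _ (bd5_unitary _ _ _ A1_mem one_mem (by simp))).mp
      (hX A1 1 1 A1_mem one_mem (by simp))
  have E2 : bd5 1 A1 1 * X = X * bd5 1 A1 1 :=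
    (conj_iff_comm _ _ (bd5_unitary _ _ _ one_mem A1_mem (by simp))).mp
      (hX 1 A1 1 one_mem A1_mem (by simp))
  have E3 : bd5 AJ 1 1 * X = X * bd5 AJ 1 1 :=
    (conj_iff_comm _ _ (bd5_unitary _ _ _ AJ_mem one_mem (by simp))).mp
      (hX AJ 1 1 AJ_mem one_mem (by simp))
  have E4 : bd5 1 AJ 1 * X = X * bd5 1 AJ 1 :=
    (conj_iff_comm _ _ (bd5_unitary _ _ _ one_mem AJ_mem (by simp))).mp
      (hX 1 AJ 1 one_mem AJ_mem (by simp))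
  have z01 : X 0 1 = 0 := by
    have e := congrFun (congrFun E1 0) 1
    simp [bd5, A1, AJ, Matrix.mul_apply, Fin.sum_univ_five, Matrix.one_apply, Matrix.vecHead, Matrix.vecTail] at e
    exact kill (a := Complex.I) (b := -Complex.I) (by norm_num [Complex.ext_iff]) (by linear_combination e)
  have z10 : X 1 0 = 0 := by
    have e := congrFun (congrFun E1 1) 0
    simp [bd5, A1, AJ, Matrix.mul_apply, Fin.sum_univ_five, Matrix.one_apply, Matrix.vecHead, Matrix.vecTail] at e
    exact kill (a := -Complex.I) (b := Complex.I) (by norm_num [Complex.ext_iff]) (by linear_combination e)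
  have z02 : X 0 2 = 0 := by
    have e := congrFun (congrFun E1 0) 2
    simp [bd5, A1, AJ, Matrix.mul_apply, Fin.sum_univ_five, Matrix.one_apply, Matrix.vecHead, Matrix.vecTail] at e
    exact kill (a := Complex.I) (b := 1) (by norm_num [Complex.ext_iff]) (by linear_combination e)
  have z20 : X 2 0 = 0 := by
    have e := congrFun (congrFun E1 2) 0
    simp [bd5, A1, AJ, Matrix.mul_apply, Fin.sum_univ_five, Matrix.one_apply, Matrix.vecHead, Matrix.vecTail] at e
    exact kill (a := 1) (b := Complex.I) (by norm_num [Complex.ext_iff]) (by linear_combination e)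
  have z03 : X 0 3 = 0 := by
    have e := congrFun (congrFun E1 0) 3
    simp [bd5, A1, AJ, Matrix.mul_apply, Fin.sum_univ_five, Matrix.one_apply, Matrix.vecHead, Matrix.vecTail] at e
    exact kill (a := Complex.I) (b := 1) (by norm_num [Complex.ext_iff]) (by linear_combination e)
  have z30 : X 3 0 = 0 := by
    have e := congrFun (congrFun E1 3) 0
    simp [bd5, A1, AJ, Matrix.mul_apply, Fin.sum_univ_five, Matrix.one_apply, Matrix.vecHead, Matrix.vecTail] at e
    exact kill (a := 1) (b := Complex.I) (by norm_num [Complex.ext_iff]) (by linear_combination e)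
  have z04 : X 0 4 = 0 := by
    have e := congrFun (congrFun E1 0) 4
    simp [bd5, A1, AJ, Matrix.mul_apply, Fin.sum_univ_five, Matrix.one_apply, Matrix.vecHead, Matrix.vecTail] at e
    exact kill (a := Complex.I) (b := 1) (by norm_num [Complex.ext_iff]) (by linear_combination e)
  have z40 : X 4 0 = 0 := by
    have e := congrFun (congrFun E1 4) 0
    simp [bd5, A1, AJ, Matrix.mul_apply, Fin.sum_univ_five, Matrix.one_apply, Matrix.vecHead, Matrix.vecTail] at e
    exact kill (a := 1) (b := Complex.I) (by norm_num [Complex.ext_iff]) (by linear_combination e)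
  have z12 : X 1 2 = 0 := by
    have e := congrFun (congrFun E1 1) 2
    simp [bd5, A1, AJ, Matrix.mul_apply, Fin.sum_univ_five, Matrix.one_apply, Matrix.vecHead, Matrix.vecTail] at e
    exact kill (a := -Complex.I) (b := 1) (by norm_num [Complex.ext_iff]) (by linear_combination e)
  have z21 : X 2 1 = 0 := by
    have e := congrFun (congrFun E1 2) 1
    simp [bd5, A1, AJ, Matrix.mul_apply, Fin.sum_univ_five, Matrix.one_apply, Matrix.vecHead, Matrix.vecTail] at e
    exact kill (a := 1) (b := -Complex.I) (by norm_num [Complex.ext_iff]) (by linear_combination e)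
  have z13 : X 1 3 = 0 := by
    have e := congrFun (congrFun E1 1) 3
    simp [bd5, A1, AJ, Matrix.mul_apply, Fin.sum_univ_five, Matrix.one_apply, Matrix.vecHead, Matrix.vecTail] at e
    exact kill (a := -Complex.I) (b := 1) (by norm_num [Complex.ext_iff]) (by linear_combination e)
  have z31 : X 3 1 = 0 := by
    have e := congrFun (congrFun E1 3) 1
    simp [bd5, A1, AJ, Matrix.mul_apply, Fin.sum_univ_five, Matrix.one_apply, Matrix.vecHead, Matrix.vecTail] at e
    exact kill (a := 1) (b := -Complex.I) (by norm_num [Complex.ext_iff]) (by linear_combination e)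
  have z14 : X 1 4 = 0 := by
    have e := congrFun (congrFun E1 1) 4
    simp [bd5, A1, AJ, Matrix.mul_apply, Fin.sum_univ_five, Matrix.one_apply, Matrix.vecHead, Matrix.vecTail] at e
    exact kill (a := -Complex.I) (b := 1) (by norm_num [Complex.ext_iff]) (by linear_combination e)
  have z41 : X 4 1 = 0 := by
    have e := congrFun (congrFun E1 4) 1
    simp [bd5, A1, AJ, Matrix.mul_apply, Fin.sum_univ_five, Matrix.one_apply, Matrix.vecHead, Matrix.vecTail] at e
    exact kill (a := 1) (b := -Complex.I) (by norm_num [Complex.ext_iff]) (by linear_combination e)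
  have z23 : X 2 3 = 0 := by
    have e := congrFun (congrFun E2 2) 3
    simp [bd5, A1, AJ, Matrix.mul_apply, Fin.sum_univ_five, Matrix.one_apply, Matrix.vecHead, Matrix.vecTail] at e
    exact kill (a := Complex.I) (b := -Complex.I) (by norm_num [Complex.ext_iff]) (by linear_combination e)
  have z32 : X 3 2 = 0 := by
    have e := congrFun (congrFun E2 3) 2
    simp [bd5, A1, AJ, Matrix.mul_apply, Fin.sum_univ_five, Matrix.one_apply, Matrix.vecHead, Matrix.vecTail] at e
    exact kill (a := -Complex.I) (b := Complex.I) (by norm_num [Complex.ext_iff]) (by linear_combination e)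
  have z24 : X 2 4 = 0 := by
    have e := congrFun (congrFun E2 2) 4
    simp [bd5, A1, AJ, Matrix.mul_apply, Fin.sum_univ_five, Matrix.one_apply, Matrix.vecHead, Matrix.vecTail] at e
    exact kill (a := Complex.I) (b := 1) (by norm_num [Complex.ext_iff]) (by linear_combination e)
  have z42 : X 4 2 = 0 := by
    have e := congrFun (congrFun E2 4) 2
    simp [bd5, A1, AJ, Matrix.mul_apply, Fin.sum_univ_five, Matrix.one_apply, Matrix.vecHead, Matrix.vecTail] at e
    exact kill (a := 1) (b := Complex.I) (by norm_num [Complex.ext_iff]) (by linear_combination e)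
  have z34 : X 3 4 = 0 := by
    have e := congrFun (congrFun E2 3) 4
    simp [bd5, A1, AJ, Matrix.mul_apply, Fin.sum_univ_five, Matrix.one_apply, Matrix.vecHead, Matrix.vecTail] at e
    exact kill (a := -Complex.I) (b := 1) (by norm_num [Complex.ext_iff]) (by linear_combination e)
  have z43 : X 4 3 = 0 := by
    have e := congrFun (congrFun E2 4) 3
    simp [bd5, A1, AJ, Matrix.mul_apply, Fin.sum_univ_five, Matrix.one_apply, Matrix.vecHead, Matrix.vecTail] at e
    exact kill (a := 1) (b := -Complex.I) (by norm_num [Complex.ext_iff]) (by linear_combination e)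
  have s1 : X 1 1 = X 0 0 := by
    have e := congrFun (congrFun E3 0) 1
    simp [bd5, A1, AJ, Matrix.mul_apply, Fin.sum_univ_five, Matrix.one_apply, Matrix.vecHead, Matrix.vecTail] at e
    linear_combination e
  have s2 : X 3 3 = X 2 2 := by
    have e := congrFun (congrFun E4 2) 3
    simp [bd5, A1, AJ, Matrix.mul_apply, Fin.sum_univ_five, Matrix.one_apply, Matrix.vecHead, Matrix.vecTail] at e
    linear_combination e
  simp only [Matrix.trace, Matrix.diag, Fin.sum_univ_five] at htr
  refine ⟨X 0 0, X 2 2, X 4 4, by linear_combination htr - s1 - s2, ?_⟩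
  ext i j
  fin_cases i <;> fin_cases j <;>
    simp [Matrix.diagonal, Matrix.vecHead, Matrix.vecTail] <;>
    first
      | rfl | exact s1 | exact s2
      | exact z01 | exact z10 | exact z02 | exact z20 | exact z03 | exact z30
      | exact z04 | exact z40 | exact z12 | exact z21 | exact z13 | exact z31
      | exact z14 | exact z41 | exact z23 | exact z32 | exact z24 | exact z42
      | exact z34 | exact z43

-- Part 2 helpers
def D1 : Matrix (Fin 5) (Fin 5) ℂ := Matrix.diagonal ![1, 1, 0, 0, -2]
def D2 : Matrix (Fin 5) (Fin 5) ℂ := Matrix.diagonal ![0, 0, 1, 1, -2]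

def fmap : (ℂ × ℂ) →ₗ[ℂ] Matrix (Fin 5) (Fin 5) ℂ where
  toFun p := p.1 • D1 + p.2 • D2
  map_add' x y := by simp only [Prod.fst_add, Prod.snd_add, add_smul]; abel
  map_smul' c x := by simp only [RingHom.id_apply, Prod.smul_fst, Prod.smul_snd, smul_eq_mul,
    mul_smul, smul_add]

lemma smul_diag (a b : ℂ) (v : Fin 5 → ℂ) :
    a • Matrix.diagonal v = Matrix.diagonal (fun i => a * v i) := by
  ext i j
  by_cases h : i = j <;> simp [Matrix.diagonal, h]

lemma fmap_range : LinearMap.range fmap = Submodule.span ℂ diagSet := by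
  apply le_antisymm
  · rintro Y ⟨⟨a, b⟩, rfl⟩
    have hD1 : D1 ∈ diagSet := ⟨1, 0, -2, by ring, rfl⟩
    have hD2 : D2 ∈ diagSet := ⟨0, 1, -2, by ring, rfl⟩
    exact Submodule.add_mem _
      (Submodule.smul_mem _ _ (Submodule.subset_span hD1))
      (Submodule.smul_mem _ _ (Submodule.subset_span hD2))
  · rw [Submodule.span_le]
    rintro Y ⟨c₁, c₂, c₃, hc, rfl⟩
    refine ⟨(c₁, c₂), ?_⟩
    show c₁ • D1 + c₂ • D2 = _
    ext i j
    fin_cases i <;> fin_cases j <;>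
      simp [D1, D2, Matrix.diagonal, Matrix.smul_apply, Matrix.vecHead, Matrix.vecTail] <;>
      first | rfl | ring1 | linear_combination -hc

lemma fmap_inj : Function.Injective fmap := by
  intro p q hpq
  have h0 := congrFun (congrFun hpq 0) 0
  have h2 := congrFun (congrFun hpq 2) 2
  simp [fmap, D1, D2, Matrix.diagonal, Matrix.vecHead, Matrix.vecTail] at h0 h2
  exact Prod.ext h0 h2

-- Part 3 helpers
def gi : Matrix (Fin 5) (Fin 5) ℂ :=
  !![0, 0, 1, 0, 0;
     0, 0, 0, -1, 0;
     1, 0, 0, 0, 0;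
     0, 1, 0, 0, 0;
     0, 0, 0, 0, 1]

set_option maxHeartbeats 1000000 in
lemma g5_gi : g5 * gi = 1 := by
  ext i j
  fin_cases i <;> fin_cases j <;>
    simp [g5, gi, Matrix.mul_apply, Fin.sum_univ_five, Matrix.one_apply, Matrix.vecHead, Matrix.vecTail]

lemma g5_inv : g5⁻¹ = gi := Matrix.inv_eq_right_inv g5_gi

set_option maxHeartbeats 1000000 in
lemma g5_swap (c₁ c₂ c₃ : ℂ) :
    g5 * Matrix.diagonal ![c₁, c₁, c₂, c₂, c₃]
      = Matrix.diagonal ![c₂, c₂, c₁, c₁, c₃] * g5 := by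
  ext i j
  fin_cases i <;> fin_cases j <;>
    simp [g5, Matrix.mul_apply, Fin.sum_univ_five, Matrix.diagonal, Matrix.vecHead, Matrix.vecTail]

lemma g5_conj (c₁ c₂ c₃ : ℂ) :
    g5 * Matrix.diagonal ![c₁, c₁, c₂, c₂, c₃] * g5⁻¹
      = Matrix.diagonal ![c₂, c₂, c₁, c₁, c₃] := by
  rw [g5_inv, g5_swap, mul_assoc, g5_gi, mul_one]

theorem statement10 :
    ({X : Matrix (Fin 5) (Fin 5) ℂ | X.trace = 0 ∧
        ∀ (A B : Mat2) (c : ℂ), A ∈ SU2 → B ∈ SU2 → ‖c‖ = 1 →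
          bd5 A B c * X * (bd5 A B c)⁻¹ = X}
      = diagSet) ∧
    Module.finrank ℂ ↥(Submodule.span ℂ diagSet) = 2 ∧
    (∀ c₁ c₂ c₃ : ℂ,
      g5 * Matrix.diagonal ![c₁, c₁, c₂, c₂, c₃] * g5⁻¹
        = Matrix.diagonal ![c₂, c₂, c₁, c₁, c₃]) ∧
    ({X : Matrix (Fin 5) (Fin 5) ℂ | X.trace = 0 ∧
        (∀ (A B : Mat2) (c : ℂ), A ∈ SU2 → B ∈ SU2 → ‖c‖ = 1 →
          bd5 A B c * X * (bd5 A B c)⁻¹ = X) ∧ g5 * X * g5⁻¹ = X}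
      = Set.range (fun c : ℂ => c • Matrix.diagonal ![-1, -1, -1, -1, 4])) := by
  have key : ({X : Matrix (Fin 5) (Fin 5) ℂ | X.trace = 0 ∧
        ∀ (A B : Mat2) (c : ℂ), A ∈ SU2 → B ∈ SU2 → ‖c‖ = 1 →
          bd5 A B c * X * (bd5 A B c)⁻¹ = X}
      = diagSet) := by
    ext X
    constructor
    · rintro ⟨htr, hX⟩
      exact forward X htr hX
    · rintro ⟨c₁, c₂, c₃, hc, rfl⟩
      constructor
      · simp only [Matrix.trace, Matrix.diag, Matrix.diagonal, Fin.sum_univ_five]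
        simp [Matrix.vecHead, Matrix.vecTail]
        linear_combination hc
      · intro A B c hA hB hcabs
        exact (conj_iff_comm _ _ (bd5_unitary _ _ _ hA hB hcabs)).mpr
          (bd5_comm_diag A B c c₁ c₂ c₃)
  refine ⟨key, ?_, g5_conj, ?_⟩
  · rw [← fmap_range, LinearMap.finrank_range_of_inj fmap_inj]
    simp [Module.finrank_prod]
  · ext X
    constructor
    · rintro ⟨htr, hco, hg⟩
      obtain ⟨c₁, c₂, c₃, hc, rfl⟩ := forward X htr hco
      rw [g5_conj] at hg
      have h00 : c₂ = c₁ := by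
        have := congrFun (congrFun hg 0) 0
        simpa [Matrix.diagonal] using this
      subst h00
      refine ⟨-c₂, ?_⟩
      show (-c₂) • Matrix.diagonal ![(-1 : ℂ), -1, -1, -1, 4] = Matrix.diagonal ![c₂, c₂, c₂, c₂, c₃]
      ext i j
      fin_cases i <;> fin_cases j <;>
        simp [Matrix.diagonal, Matrix.smul_apply, Matrix.vecHead, Matrix.vecTail] <;>
        first | rfl | ring1 | linear_combination hc | linear_combination -hc
    · rintro ⟨c, rfl⟩
      have hform : c • Matrix.diagonal ![(-1 : ℂ), -1, -1, -1, 4]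
          = Matrix.diagonal ![-c, -c, -c, -c, 4 * c] := by
        ext i j
        fin_cases i <;> fin_cases j <;>
          simp [Matrix.diagonal, Matrix.smul_apply, Matrix.vecHead, Matrix.vecTail] <;> ring
      refine ⟨?_, ?_, ?_⟩
      · show (c • Matrix.diagonal ![(-1 : ℂ), -1, -1, -1, 4]).trace = 0
        rw [hform]
        simp only [Matrix.trace, Matrix.diag, Matrix.diagonal, Fin.sum_univ_five]
        simp [Matrix.vecHead, Matrix.vecTail]
        ring
      · show ∀ (A B : Mat2) (c' : ℂ), A ∈ SU2 → B ∈ SU2 → ‖c'‖ = 1 →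
          bd5 A B c' * (c • Matrix.diagonal ![(-1 : ℂ), -1, -1, -1, 4]) * (bd5 A B c')⁻¹
            = c • Matrix.diagonal ![(-1 : ℂ), -1, -1, -1, 4]
        intro A B c' hA hB hcabs
        rw [hform]
        exact (conj_iff_comm _ _ (bd5_unitary _ _ _ hA hB hcabs)).mpr
          (bd5_comm_diag A B c' (-c) (-c) (4 * c))
      · show g5 * (c • Matrix.diagonal ![(-1 : ℂ), -1, -1, -1, 4]) * g5⁻¹
            = c • Matrix.diagonal ![(-1 : ℂ), -1, -1, -1, 4]
        rw [hform]
        exact g5_conj (-c) (-c) (4 * c)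

end
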